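/- Let (G, p) be a finite critical net in ℝ^k satisfying the balance condition. Then the degree of every interior vertex is at most the number of leaves: for every vertex x of G of degree ≥ 2, deg_G(x) ≤ |∂X|. -/

import Mathlib

open scoped RealInnerProductSpace
open MeasureTheory Real

private lemma max_neg_sub_max (a : ℝ) : max (-a) 0 - max a 0 = -a := by
  rcases le_total a 0 with h | h
  · rw [max_eq_left (neg_nonneg.2 h), max_eq_right h, sub_zero]
  · rw [max_eq_right (neg_nonpos.2 h), max_eq_left h, zero_sub]

private lemma key_combinatorial
    {V : Type*} [Fintype V] [DecidableEq V]
    (G : SimpleGraph V) [DecidableRel G.Adj]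
    (hdeg1 : ∀ x : V, 1 ≤ G.degree x)
    (F : V → V → ℝ)
    (hFanti : ∀ z y : V, F y z = - F z y)
    (hFbal : ∀ z : V, 2 ≤ G.degree z → ∑ y ∈ G.neighborFinset z, F z y = 0)
    (x : V) (hx : 2 ≤ G.degree x)
    (nb : V → V) (hnb : ∀ l, G.degree l = 1 → G.neighborFinset l = {nb l})
    (φ : V → ℝ)
    (hFsign : ∀ z y : V, G.Adj z y → (0 ≤ F z y ↔ φ y ≤ φ z)) :
    (∑ y ∈ G.neighborFinset x, max (F x y) 0)
      ≤ ∑ l ∈ Finset.univ.filter (fun l : V => G.degree l = 1), max (F l (nb l)) 0 := by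
  classical
  set S : Finset V :=
    Finset.univ.filter (fun z => 2 ≤ G.degree z ∧ (φ x < φ z ∨ z = x)) with hSdef
  have hxS : x ∈ S := by rw [hSdef]; simp [hx]
  set g : V → V → ℝ := fun z y => if G.Adj z y then F z y else 0 with hgdef
  have hganti : ∀ z y : V, g y z = - g z y := by
    intro z y
    simp only [hgdef]
    by_cases h : G.Adj z y
    · rw [if_pos h, if_pos h.symm, hFanti]
    · rw [if_neg h, if_neg fun h' => h h'.symm, neg_zero]
  have hrow : ∀ z ∈ S, ∑ y ∈ Finset.univ, g z y = 0 := by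
    intro z hz
    have hz2 : 2 ≤ G.degree z := by
      rw [hSdef] at hz
      exact (Finset.mem_filter.mp hz).2.1
    calc ∑ y ∈ Finset.univ, g z y = ∑ y ∈ Finset.univ.filter (G.Adj z), F z y := by
          simp only [hgdef]; rw [Finset.sum_filter]
      _ = ∑ y ∈ G.neighborFinset z, F z y := by rw [SimpleGraph.neighborFinset_eq_filter]
      _ = 0 := hFbal z hz2
  have hSS : ∑ z ∈ S, ∑ y ∈ S, g z y = 0 := by
    have h1 : ∑ z ∈ S, ∑ y ∈ S, g z y = - ∑ z ∈ S, ∑ y ∈ S, g z y := by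
      calc ∑ z ∈ S, ∑ y ∈ S, g z y
          = ∑ z ∈ S, ∑ y ∈ S, g y z := Finset.sum_comm
        _ = ∑ z ∈ S, ∑ y ∈ S, -(g z y) :=
            Finset.sum_congr rfl fun z _ => Finset.sum_congr rfl fun y _ => hganti z y
        _ = - ∑ z ∈ S, ∑ y ∈ S, g z y := by simp_rw [Finset.sum_neg_distrib]
    linarith
  have hT' : ∑ z ∈ S, ∑ y ∈ Finset.univ \ S, g z y = 0 := by
    have hT : ∑ z ∈ S, ∑ y ∈ Finset.univ, g z y = 0 := Finset.sum_eq_zero hrow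
    have hsplit : ∑ z ∈ S, ∑ y ∈ Finset.univ, g z y
        = ∑ z ∈ S, (∑ y ∈ Finset.univ \ S, g z y + ∑ y ∈ S, g z y) := by
      refine Finset.sum_congr rfl fun z _ => ?_
      rw [Finset.sum_sdiff (Finset.subset_univ S)]
    rw [hsplit, Finset.sum_add_distrib, hSS, add_zero] at hT
    exact hT
  set L : V → ℝ := fun y => if G.Adj x y then max (F x y) 0 else 0 with hLdef
  set c : V → ℝ := fun y => max (F y (nb y)) 0 with hcdef
  have hc_nonneg : ∀ y, 0 ≤ c y := fun y => by simp only [hcdef]; exact le_max_right _ 0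
  have hbound : ∀ z ∈ S, ∀ y ∈ Finset.univ \ S,
      (if z = x then L y else 0) - (if G.degree y = 1 ∧ G.Adj z y then c y else 0) ≤ g z y := by
    intro z hz y hy
    rw [hSdef, Finset.mem_filter] at hz
    obtain ⟨-, hz2, hzor⟩ := hz
    rw [Finset.mem_sdiff] at hy
    have hyS : ¬(2 ≤ G.degree y ∧ (φ x < φ y ∨ y = x)) := by
      intro hc
      exact hy.2 (by rw [hSdef]; exact Finset.mem_filter.mpr ⟨Finset.mem_univ y, hc⟩)
    by_cases hadj : G.Adj z y
    · have hgzy : g z y = F z y := by simp only [hgdef, if_pos hadj]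
      by_cases hy1 : G.degree y = 1
      · have hnbz : z = nb y := by
          have hzmem : z ∈ G.neighborFinset y := by
            rw [SimpleGraph.mem_neighborFinset]; exact hadj.symm
          rw [hnb y hy1] at hzmem
          exact Finset.mem_singleton.mp hzmem
        have hFz : F z y = - F y (nb y) := by rw [← hnbz, hFanti]
        rw [if_pos (show G.degree y = 1 ∧ G.Adj z y from ⟨hy1, hadj⟩)]
        by_cases hzx : z = x
        · rw [if_pos hzx]
          have hLy : L y = max (- F y (nb y)) 0 := by
            simp only [hLdef]
            rw [if_pos (hzx ▸ hadj), ← hzx, hFz]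
          rw [hLy]
          simp only [hcdef]
          rw [hgzy, hFz]
          exact le_of_eq (max_neg_sub_max _)
        · rw [if_neg hzx, hgzy, hFz, zero_sub]
          simp only [hcdef]
          exact neg_le_neg (le_max_left _ 0)
      · have hy2 : 2 ≤ G.degree y := by have := hdeg1 y; omega
        have hyx : ¬(φ x < φ y ∨ y = x) := fun hc => hyS ⟨hy2, hc⟩
        push_neg at hyx
        have hφy : φ y ≤ φ x := hyx.1
        have hφz : φ x ≤ φ z := by
          rcases hzor with h | h
          · exact h.le
          · rw [h]
        have hF0 : 0 ≤ F z y := (hFsign z y hadj).mpr (le_trans hφy hφz)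
        rw [if_neg (show ¬(G.degree y = 1 ∧ G.Adj z y) from fun hc => hy1 hc.1), sub_zero, hgzy]
        by_cases hzx : z = x
        · rw [if_pos hzx]
          simp only [hLdef]
          rw [if_pos (hzx ▸ hadj), ← hzx]
          exact le_of_eq (max_eq_left hF0)
        · rw [if_neg hzx]
          exact hF0
    · have hgzy : g z y = 0 := by simp only [hgdef, if_neg hadj]
      rw [if_neg (show ¬(G.degree y = 1 ∧ G.Adj z y) from fun hc => hadj hc.2), sub_zero, hgzy]
      by_cases hzx : z = x
      · rw [if_pos hzx]
        simp only [hLdef]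
        rw [if_neg (hzx ▸ hadj)]
      · rw [if_neg hzx]
  have hmono : ∑ z ∈ S, ∑ y ∈ Finset.univ \ S,
      ((if z = x then L y else 0) - (if G.degree y = 1 ∧ G.Adj z y then c y else 0)) ≤ 0 := by
    have h := Finset.sum_le_sum fun z hz => Finset.sum_le_sum fun y hy => hbound z hz y hy
    rw [hT'] at h
    exact h
  have hA : ∑ z ∈ S, ∑ y ∈ Finset.univ \ S, (if z = x then L y else 0)
      = ∑ y ∈ Finset.univ \ S, L y := by
    rw [Finset.sum_comm]
    refine Finset.sum_congr rfl fun y _ => ?_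
    rw [Finset.sum_ite_eq' S x (fun _ => L y), if_pos hxS]
  have hB : ∑ z ∈ S, ∑ y ∈ Finset.univ \ S, (if G.degree y = 1 ∧ G.Adj z y then c y else 0)
      ≤ ∑ l ∈ Finset.univ.filter (fun l : V => G.degree l = 1), c l := by
    rw [Finset.sum_comm]
    have hone : ∀ y ∈ Finset.univ \ S,
        (∑ z ∈ S, if G.degree y = 1 ∧ G.Adj z y then c y else 0)
          ≤ (if G.degree y = 1 then c y else 0) := by
      intro y _
      by_cases hy1 : G.degree y = 1
      · rw [if_pos hy1]
        have hcongr : ∀ z ∈ S, (if G.degree y = 1 ∧ G.Adj z y then c y else 0)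
            = if z = nb y then c y else 0 := by
          intro z _
          by_cases hadj : G.Adj z y
          · have hz : z = nb y := by
              have hzmem : z ∈ G.neighborFinset y := by
                rw [SimpleGraph.mem_neighborFinset]; exact hadj.symm
              rw [hnb y hy1] at hzmem
              exact Finset.mem_singleton.mp hzmem
            rw [if_pos (show G.degree y = 1 ∧ G.Adj z y from ⟨hy1, hadj⟩), if_pos hz]
          · rw [if_neg (show ¬(G.degree y = 1 ∧ G.Adj z y) from fun hc => hadj hc.2), if_neg]
            intro hz
            apply hadj
            have : nb y ∈ G.neighborFinset y := by
              rw [hnb y hy1]; exact Finset.mem_singleton_self _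
            rw [SimpleGraph.mem_neighborFinset] at this
            rw [hz]
            exact this.symm
        rw [Finset.sum_congr rfl hcongr, Finset.sum_ite_eq' S (nb y) (fun _ => c y)]
        split
        · exact le_refl _
        · exact hc_nonneg y
      · rw [if_neg hy1]
        refine le_of_eq (Finset.sum_eq_zero fun z _ => ?_)
        rw [if_neg (show ¬(G.degree y = 1 ∧ G.Adj z y) from fun hc => hy1 hc.1)]
    calc ∑ y ∈ Finset.univ \ S, ∑ z ∈ S, (if G.degree y = 1 ∧ G.Adj z y then c y else 0)
        ≤ ∑ y ∈ Finset.univ \ S, (if G.degree y = 1 then c y else 0) :=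
          Finset.sum_le_sum hone
      _ ≤ ∑ y ∈ Finset.univ, (if G.degree y = 1 then c y else 0) := by
          refine Finset.sum_le_sum_of_subset_of_nonneg (Finset.sdiff_subset) fun y _ _ => ?_
          split
          · exact hc_nonneg y
          · exact le_refl 0
      _ = ∑ l ∈ Finset.univ.filter (fun l : V => G.degree l = 1), c l := by
          rw [Finset.sum_filter]
  have hL_S : ∀ y ∈ S, L y = 0 := by
    intro y hy
    rw [hSdef, Finset.mem_filter] at hy
    obtain ⟨-, hy2, hyor⟩ := hy
    simp only [hLdef]
    by_cases hadj : G.Adj x y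
    · rw [if_pos hadj]
      have hyx : y ≠ x := fun h => G.irrefl (h ▸ hadj)
      have hφ : φ x < φ y := hyor.resolve_right hyx
      have : ¬ (0 ≤ F x y) := by
        rw [hFsign x y hadj]
        exact not_le.mpr hφ
      exact max_eq_right (le_of_lt (not_le.mp this))
    · rw [if_neg hadj]
  have hLHS : ∑ y ∈ G.neighborFinset x, max (F x y) 0 = ∑ y ∈ Finset.univ \ S, L y := by
    have h1 : ∑ y ∈ G.neighborFinset x, max (F x y) 0 = ∑ y ∈ Finset.univ, L y := by
      simp only [hLdef]
      rw [SimpleGraph.neighborFinset_eq_filter, Finset.sum_filter]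
    rw [h1, ← Finset.sum_sdiff (Finset.subset_univ S), Finset.sum_eq_zero hL_S, add_zero]
  have hsub : ∑ z ∈ S, ∑ y ∈ Finset.univ \ S,
      ((if z = x then L y else 0) - (if G.degree y = 1 ∧ G.Adj z y then c y else 0))
      = (∑ z ∈ S, ∑ y ∈ Finset.univ \ S, (if z = x then L y else 0))
        - ∑ z ∈ S, ∑ y ∈ Finset.univ \ S, (if G.degree y = 1 ∧ G.Adj z y then c y else 0) := by
    rw [← Finset.sum_sub_distrib]
    exact Finset.sum_congr rfl fun z _ => by rw [Finset.sum_sub_distrib]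
  rw [hsub, hA] at hmono
  have : ∑ y ∈ Finset.univ \ S, L y
      ≤ ∑ l ∈ Finset.univ.filter (fun l : V => G.degree l = 1), c l := by linarith
  rw [hLHS]
  simpa only [hcdef] using this

private lemma aux_c1_pos : 0 < ∫ t : ℝ, |t| * Real.exp (-t ^ 2) := by
  have hi : Integrable (fun t : ℝ => |t| * Real.exp (-t ^ 2)) := by
    have h1 := (integrable_mul_exp_neg_mul_sq (one_pos : (0:ℝ) < 1)).abs
    refine h1.congr (Filter.Eventually.of_forall fun t => ?_)
    simp [abs_mul, abs_of_pos (Real.exp_pos _), neg_one_mul]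
  rw [integral_pos_iff_support_of_nonneg (fun t => by positivity) hi]
  refine lt_of_lt_of_le ?_ (measure_mono (fun t (ht : t ∈ Set.Ioi (0:ℝ)) => ?_))
  · rw [Real.volume_Ioi]; simp
  · exact ne_of_gt (mul_pos (abs_pos.2 (ne_of_gt ht)) (Real.exp_pos _))

private lemma aux_c0_pos : 0 < ∫ t : ℝ, Real.exp (-t ^ 2) := by
  have hi : Integrable (fun t : ℝ => Real.exp (-t ^ 2)) := by
    have h1 := integrable_exp_neg_mul_sq (one_pos : (0:ℝ) < 1)
    refine h1.congr (Filter.Eventually.of_forall fun t => ?_)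
    simp [neg_one_mul]
  rw [integral_pos_iff_support_of_nonneg (fun t => (Real.exp_pos _).le) hi]
  refine lt_of_lt_of_le ?_ (measure_mono (fun t (ht : t ∈ Set.Ioi (0:ℝ)) => ?_))
  · rw [Real.volume_Ioi]; simp
  · exact ne_of_gt (Real.exp_pos _)

private lemma integral_abs_inner_gaussian {k : ℕ} (hk : 1 ≤ k)
    (e : EuclideanSpace ℝ (Fin k)) (he : ‖e‖ = 1) :
    Integrable (fun v : EuclideanSpace ℝ (Fin k) => |⟪e, v⟫| * Real.exp (-‖v‖ ^ 2)) ∧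
      ∫ v : EuclideanSpace ℝ (Fin k), |⟪e, v⟫| * Real.exp (-‖v‖ ^ 2)
        = (∫ t : ℝ, |t| * Real.exp (-t ^ 2)) * (∫ t : ℝ, Real.exp (-t ^ 2)) ^ (k - 1) := by
  classical
  set i0 : Fin k := ⟨0, by omega⟩ with hi0
  -- an orthonormal basis whose `i0`-th vector is `e`
  obtain ⟨b, hb⟩ : ∃ b : OrthonormalBasis (Fin k) ℝ (EuclideanSpace ℝ (Fin k)), b i0 = e := by
    have hcard : Module.finrank ℝ (EuclideanSpace ℝ (Fin k)) = Fintype.card (Fin k) := by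
      simp [finrank_euclideanSpace]
    have horth : Orthonormal ℝ (Set.restrict {i0} (fun _ : Fin k => e)) := by
      constructor
      · intro i; exact he
      · intro i j hij
        exact absurd (Subtype.ext ((Set.mem_singleton_iff.mp i.2).trans
          (Set.mem_singleton_iff.mp j.2).symm)) hij
    obtain ⟨b, hb⟩ := horth.exists_orthonormalBasis_extension_of_card_eq hcard
    exact ⟨b, hb i0 rfl⟩
  set F : EuclideanSpace ℝ (Fin k) → ℝ := fun w => |w i0| * Real.exp (-‖w‖ ^ 2) with hF
  have hrepr : ∀ v : EuclideanSpace ℝ (Fin k),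
      |⟪e, v⟫| * Real.exp (-‖v‖ ^ 2) = F (b.repr v) := by
    intro v
    rw [hF]
    simp only [OrthonormalBasis.repr_apply_apply, b.repr.norm_map, hb]
  set gg : Fin k → ℝ → ℝ := fun j t =>
    if j = i0 then |t| * Real.exp (-t ^ 2) else Real.exp (-t ^ 2) with hgg
  have hggint : ∀ j, Integrable (gg j) := by
    intro j
    by_cases h : j = i0
    · have h1 := (integrable_mul_exp_neg_mul_sq (one_pos)).abs
      refine h1.congr (Filter.Eventually.of_forall fun t => ?_)
      have hgt : gg j t = |t| * Real.exp (-t ^ 2) := by rw [hgg]; simp [h]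
      rw [hgt]; simp [abs_mul, abs_of_pos (Real.exp_pos _), neg_one_mul]
    · have h1 := integrable_exp_neg_mul_sq (one_pos : (0:ℝ) < 1)
      refine h1.congr (Filter.Eventually.of_forall fun t => ?_)
      have hgt : gg j t = Real.exp (-t ^ 2) := by rw [hgg]; simp [h]
      rw [hgt]; simp [neg_one_mul]
  have hprod : ∀ w : Fin k → ℝ,
      F ((MeasurableEquiv.toLp 2 (Fin k → ℝ)).symm.symm w) = ∏ j, gg j (w j) := by
    intro w
    have hcoord : ∀ j, ((MeasurableEquiv.toLp 2 (Fin k → ℝ)).symm.symm w) j = w j := fun _ => rfl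
    have hnorm : ‖(MeasurableEquiv.toLp 2 (Fin k → ℝ)).symm.symm w‖ ^ 2 = ∑ j, (w j) ^ 2 := by
      rw [EuclideanSpace.norm_eq, Real.sq_sqrt (by positivity)]
      simp [hcoord, sq_abs]
    have : ∏ j, gg j (w j)
        = (∏ j, if j = i0 then |w j| else 1) * ∏ j, Real.exp (-(w j) ^ 2) := by
      rw [← Finset.prod_mul_distrib]
      refine Finset.prod_congr rfl fun j _ => ?_
      rw [hgg]
      by_cases h : j = i0 <;> simp [h]
    rw [this, Finset.prod_ite_eq' Finset.univ i0 (fun j => |w j|), if_pos (Finset.mem_univ i0),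
      ← Real.exp_sum]
    rw [hF]
    simp only [hcoord, hnorm]
    congr 1
    rw [← Finset.sum_neg_distrib]
  have hVP := EuclideanSpace.volume_preserving_symm_measurableEquiv_toLp (Fin k)
  have hintpi : Integrable (fun w : Fin k → ℝ => ∏ j, gg j (w j)) :=
    Integrable.fintype_prod hggint
  have hVPs := MeasurePreserving.symm _ hVP
  have hembsymm := (MeasurableEquiv.toLp 2 (Fin k → ℝ)).symm.symm.measurableEmbedding
  have hFpi : Integrable (F ∘ (MeasurableEquiv.toLp 2 (Fin k → ℝ)).symm.symm) := by
    refine hintpi.congr (Filter.Eventually.of_forall fun w => ?_)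
    exact (hprod w).symm
  have hFint : Integrable F := (hVPs.integrable_comp_emb hembsymm).mp hFpi
  have hembrepr := b.repr.toHomeomorph.measurableEmbedding
  have hmain : Integrable (F ∘ ⇑b.repr) :=
    (b.measurePreserving_repr.integrable_comp_emb hembrepr).mpr hFint
  constructor
  · refine hmain.congr (Filter.Eventually.of_forall fun v => ?_)
    exact (hrepr v).symm
  · calc ∫ v : EuclideanSpace ℝ (Fin k), |⟪e, v⟫| * Real.exp (-‖v‖ ^ 2)
        = ∫ v, F (b.repr v) := by
          exact integral_congr_ae (Filter.Eventually.of_forall hrepr)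
      _ = ∫ w, F w := b.measurePreserving_repr.integral_comp hembrepr F
      _ = ∫ w : Fin k → ℝ, F ((MeasurableEquiv.toLp 2 (Fin k → ℝ)).symm.symm w) :=
          (hVPs.integral_comp hembsymm F).symm
      _ = ∫ w : Fin k → ℝ, ∏ j, gg j (w j) :=
          integral_congr_ae (Filter.Eventually.of_forall hprod)
      _ = ∏ j, ∫ t, gg j t := by
          exact MeasureTheory.integral_fintype_prod_eq_prod (ι := Fin k) gg
      _ = (∫ t : ℝ, |t| * Real.exp (-t ^ 2)) * (∫ t : ℝ, Real.exp (-t ^ 2)) ^ (k - 1) := by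
          have : ∀ j, (∫ t, gg j t)
              = if j = i0 then (∫ t : ℝ, |t| * Real.exp (-t ^ 2))
                else (∫ t : ℝ, Real.exp (-t ^ 2)) := by
            intro j
            rw [hgg]
            by_cases h : j = i0 <;> simp [h]
          simp_rw [this]
          rw [← Finset.mul_prod_erase Finset.univ _ (Finset.mem_univ i0), if_pos rfl]
          congr 1
          rw [Finset.prod_congr rfl (fun j hj => if_neg (Finset.ne_of_mem_erase hj)),
            Finset.prod_const, Finset.card_erase_of_mem (Finset.mem_univ i0), Finset.card_univ,
            Fintype.card_fin]


/-- In a finite critical net in `ℝ^k` satisfying the balance condition,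
the degree of every interior vertex (degree ≥ 2) is at most the number of leaves. -/
theorem degree_le_card_leaves
    {k : ℕ} (hk : 1 ≤ k) {V : Type*} [Fintype V] [DecidableEq V]
    (G : SimpleGraph V) [DecidableRel G.Adj]
    (p : V → EuclideanSpace ℝ (Fin k)) (hinj : Function.Injective p)
    (hdeg1 : ∀ x : V, 1 ≤ G.degree x)
    (hnoLL : ∀ x y : V, G.Adj x y → ¬(G.degree x = 1 ∧ G.degree y = 1))
    (hbal : ∀ x : V, 2 ≤ G.degree x →
      ∑ y ∈ G.neighborFinset x, (‖p x - p y‖)⁻¹ • (p x - p y) = 0)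
    (x : V) (hx : 2 ≤ G.degree x) :
    G.degree x ≤ (Finset.univ.filter fun l : V => G.degree l = 1).card := by
  classical
  set u : V → V → EuclideanSpace ℝ (Fin k) := fun z y => (‖p z - p y‖)⁻¹ • (p z - p y) with hu
  -- the unique neighbour of a leaf
  have hnbex : ∀ l : V, G.degree l = 1 → ∃ z, G.neighborFinset l = {z} := by
    intro l hl
    rw [← SimpleGraph.card_neighborFinset_eq_degree] at hl
    exact Finset.card_eq_one.mp hl
  set nb : V → V := fun l => if h : ∃ z, G.neighborFinset l = {z} then h.choose else l with hnbdef
  have hnb : ∀ l, G.degree l = 1 → G.neighborFinset l = {nb l} := by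
    intro l hl
    have h := hnbex l hl
    simp only [hnbdef, dif_pos h]
    exact h.choose_spec
  have hadj_nb : ∀ l, G.degree l = 1 → G.Adj l (nb l) := by
    intro l hl
    have h : nb l ∈ G.neighborFinset l := by
      rw [hnb l hl]; exact Finset.mem_singleton_self _
    rwa [SimpleGraph.mem_neighborFinset] at h
  have hunorm : ∀ z y : V, G.Adj z y → ‖u z y‖ = 1 := by
    intro z y hadj
    have hne : p z - p y ≠ 0 := sub_ne_zero.2 fun h => G.ne_of_adj hadj (hinj h)
    simp only [hu]
    rw [norm_smul, norm_inv, norm_norm, inv_mul_cancel₀ (norm_ne_zero_iff.2 hne)]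
  have hanti : ∀ z y : V, u y z = - u z y := by
    intro z y
    simp only [hu]
    rw [norm_sub_rev, ← smul_neg, neg_sub]
  have hFbal : ∀ v : EuclideanSpace ℝ (Fin k), ∀ z, 2 ≤ G.degree z →
      ∑ y ∈ G.neighborFinset z, ⟪u z y, v⟫ = 0 := by
    intro v z hz
    rw [← sum_inner]
    simp only [hu]
    rw [hbal z hz, inner_zero_left]
  -- Key half-space inequality
  have key : ∀ v : EuclideanSpace ℝ (Fin k),
      (∑ y ∈ G.neighborFinset x, max ⟪u x y, v⟫ 0)
        ≤ ∑ l ∈ Finset.univ.filter (fun l : V => G.degree l = 1), max ⟪u l (nb l), v⟫ 0 := by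
    intro v
    refine key_combinatorial G hdeg1 (fun z y => ⟪u z y, v⟫) ?_ (hFbal v) x hx nb hnb
      (fun z => ⟪p z - p x, v⟫) ?_
    · intro z y
      show ⟪u y z, v⟫ = -⟪u z y, v⟫
      rw [hanti z y, inner_neg_left]
    · intro z y hadj
      show (0:ℝ) ≤ ⟪u z y, v⟫ ↔ ⟪p y - p x, v⟫ ≤ ⟪p z - p x, v⟫
      have hne : (0:ℝ) < ‖p z - p y‖ := by
        rw [norm_pos_iff]
        exact sub_ne_zero.2 fun h => G.ne_of_adj hadj (hinj h)
      have h1 : ⟪u z y, v⟫ = ‖p z - p y‖⁻¹ * ⟪p z - p y, v⟫ := by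
        simp only [hu]
        rw [real_inner_smul_left]
      rw [h1, mul_nonneg_iff_of_pos_left (inv_pos.2 hne)]
      have h2 : ⟪p z - p y, v⟫ = ⟪p z - p x, v⟫ - ⟪p y - p x, v⟫ := by
        rw [← inner_sub_left, sub_sub_sub_cancel_right]
      rw [h2, sub_nonneg]
  -- absolute-value version
  have keyabs : ∀ v : EuclideanSpace ℝ (Fin k),
      (∑ y ∈ G.neighborFinset x, |⟪u x y, v⟫|)
        ≤ ∑ l ∈ Finset.univ.filter (fun l : V => G.degree l = 1), |⟪u l (nb l), v⟫| := by
    intro v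
    have h1 := key v
    have h2 := key (-v)
    have habs : ∀ w : EuclideanSpace ℝ (Fin k), |⟪w, v⟫| = max ⟪w, v⟫ 0 + max ⟪w, -v⟫ 0 := by
      intro w
      rw [inner_neg_right]
      rcases le_total (⟪w, v⟫) 0 with h | h
      · rw [abs_of_nonpos h, max_eq_right h, max_eq_left (neg_nonneg.2 h), zero_add]
      · rw [abs_of_nonneg h, max_eq_left h, max_eq_right (neg_nonpos.2 h), add_zero]
    calc ∑ y ∈ G.neighborFinset x, |⟪u x y, v⟫|
        = (∑ y ∈ G.neighborFinset x, max ⟪u x y, v⟫ 0)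
          + ∑ y ∈ G.neighborFinset x, max ⟪u x y, -v⟫ 0 := by
          rw [← Finset.sum_add_distrib]
          exact Finset.sum_congr rfl fun y _ => habs _
      _ ≤ (∑ l ∈ Finset.univ.filter (fun l : V => G.degree l = 1), max ⟪u l (nb l), v⟫ 0)
          + ∑ l ∈ Finset.univ.filter (fun l : V => G.degree l = 1), max ⟪u l (nb l), -v⟫ 0 :=
          add_le_add h1 h2
      _ = ∑ l ∈ Finset.univ.filter (fun l : V => G.degree l = 1), |⟪u l (nb l), v⟫| := by
          rw [← Finset.sum_add_distrib]
          exact Finset.sum_congr rfl fun l _ => (habs _).symm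
  -- integrate against the Gaussian weight
  have hadj_x : ∀ y ∈ G.neighborFinset x, G.Adj x y := fun y hy =>
    (SimpleGraph.mem_neighborFinset G x y).mp hy
  have hleafadj : ∀ l ∈ Finset.univ.filter (fun l : V => G.degree l = 1), G.Adj l (nb l) := by
    intro l hl
    exact hadj_nb l (Finset.mem_filter.mp hl).2
  have hI := integral_abs_inner_gaussian hk
  have hint1 : ∀ y ∈ G.neighborFinset x,
      MeasureTheory.Integrable
        (fun v : EuclideanSpace ℝ (Fin k) => |⟪u x y, v⟫| * Real.exp (-‖v‖ ^ 2)) :=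
    fun y hy => (hI (u x y) (hunorm x y (hadj_x y hy))).1
  have hint2 : ∀ l ∈ Finset.univ.filter (fun l : V => G.degree l = 1),
      MeasureTheory.Integrable
        (fun v : EuclideanSpace ℝ (Fin k) => |⟪u l (nb l), v⟫| * Real.exp (-‖v‖ ^ 2)) :=
    fun l hl => (hI (u l (nb l)) (hunorm l (nb l) (hleafadj l hl))).1
  have hintS1 : MeasureTheory.Integrable (fun v : EuclideanSpace ℝ (Fin k) =>
      ∑ y ∈ G.neighborFinset x, |⟪u x y, v⟫| * Real.exp (-‖v‖ ^ 2)) :=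
    MeasureTheory.integrable_finset_sum _ hint1
  have hintS2 : MeasureTheory.Integrable (fun v : EuclideanSpace ℝ (Fin k) =>
      ∑ l ∈ Finset.univ.filter (fun l : V => G.degree l = 1),
        |⟪u l (nb l), v⟫| * Real.exp (-‖v‖ ^ 2)) :=
    MeasureTheory.integrable_finset_sum _ hint2
  have hmono : (∫ v : EuclideanSpace ℝ (Fin k),
        ∑ y ∈ G.neighborFinset x, |⟪u x y, v⟫| * Real.exp (-‖v‖ ^ 2))
      ≤ ∫ v : EuclideanSpace ℝ (Fin k),
        ∑ l ∈ Finset.univ.filter (fun l : V => G.degree l = 1),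
          |⟪u l (nb l), v⟫| * Real.exp (-‖v‖ ^ 2) := by
    refine MeasureTheory.integral_mono hintS1 hintS2 fun v => ?_
    have h1 : ∑ y ∈ G.neighborFinset x, |⟪u x y, v⟫| * Real.exp (-‖v‖ ^ 2)
        = (∑ y ∈ G.neighborFinset x, |⟪u x y, v⟫|) * Real.exp (-‖v‖ ^ 2) :=
      (Finset.sum_mul _ _ _).symm
    have h2 : ∑ l ∈ Finset.univ.filter (fun l : V => G.degree l = 1),
          |⟪u l (nb l), v⟫| * Real.exp (-‖v‖ ^ 2)
        = (∑ l ∈ Finset.univ.filter (fun l : V => G.degree l = 1), |⟪u l (nb l), v⟫|)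
            * Real.exp (-‖v‖ ^ 2) :=
      (Finset.sum_mul _ _ _).symm
    rw [h1, h2]
    exact mul_le_mul_of_nonneg_right (keyabs v) (Real.exp_pos _).le
  set C : ℝ := (∫ t : ℝ, |t| * Real.exp (-t ^ 2)) * (∫ t : ℝ, Real.exp (-t ^ 2)) ^ (k - 1)
    with hCdef
  have hCpos : 0 < C := mul_pos aux_c1_pos (pow_pos aux_c0_pos _)
  have hL : (∫ v : EuclideanSpace ℝ (Fin k),
        ∑ y ∈ G.neighborFinset x, |⟪u x y, v⟫| * Real.exp (-‖v‖ ^ 2))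
      = (G.degree x : ℝ) * C := by
    rw [MeasureTheory.integral_finset_sum _ hint1]
    have : ∀ y ∈ G.neighborFinset x,
        (∫ v : EuclideanSpace ℝ (Fin k), |⟪u x y, v⟫| * Real.exp (-‖v‖ ^ 2)) = C :=
      fun y hy => (hI (u x y) (hunorm x y (hadj_x y hy))).2
    rw [Finset.sum_congr rfl this, Finset.sum_const, SimpleGraph.card_neighborFinset_eq_degree,
      nsmul_eq_mul]
  have hR : (∫ v : EuclideanSpace ℝ (Fin k),
        ∑ l ∈ Finset.univ.filter (fun l : V => G.degree l = 1),
          |⟪u l (nb l), v⟫| * Real.exp (-‖v‖ ^ 2))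
      = ((Finset.univ.filter (fun l : V => G.degree l = 1)).card : ℝ) * C := by
    rw [MeasureTheory.integral_finset_sum _ hint2]
    have : ∀ l ∈ Finset.univ.filter (fun l : V => G.degree l = 1),
        (∫ v : EuclideanSpace ℝ (Fin k), |⟪u l (nb l), v⟫| * Real.exp (-‖v‖ ^ 2)) = C :=
      fun l hl => (hI (u l (nb l)) (hunorm l (nb l) (hleafadj l hl))).2
    rw [Finset.sum_congr rfl this, Finset.sum_const, nsmul_eq_mul]
  rw [hL, hR] at hmono
  have hfinal : (G.degree x : ℝ) ≤ ((Finset.univ.filter (fun l : V => G.degree l = 1)).card : ℝ) :=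
    le_of_mul_le_mul_right hmono hCpos
  exact_mod_cast hfinal
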